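/- For every prime p, Glaisher's congruence holds: p·B_{p-1} ≡ p + (p-1)! (mod p²), i.e., p² divides the numerator of the rational number p·B_{p-1} − p − (p-1)! in lowest terms; equivalently, w_p ≡ B_{p-1} + 1/p − 1 (mod p). -/

import Mathlib

open Finset

lemma aux_pow_one_add {R : Type*} [CommRing R] {e : R} (h : e * e = 0) (n : ℕ) :
    (1 + e) ^ n = 1 + n * e := by
  induction n with
  | zero => simp
  | succ n ih =>
    rw [pow_succ, ih]
    push_cast
    linear_combination ((n : R) : R) * h

lemma aux_prod_one_add {ι R : Type*} [CommRing R] [DecidableEq ι] {e : R} (h : e * e = 0)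
    (s : Finset ι) (a : ι → R) :
    ∏ i ∈ s, (1 + e * a i) = 1 + e * ∑ i ∈ s, a i := by
  induction s using Finset.induction_on with
  | empty => simp
  | @insert x s hx ih =>
    rw [Finset.prod_insert hx, Finset.sum_insert hx, ih]
    linear_combination (a x * ∑ i ∈ s, a i) * h

lemma aux_lerch (p : ℕ) (hp : p.Prime) (hodd : Odd p) :
    ((p:ℤ)^2) ∣ (∑ k ∈ Finset.range p, (k:ℤ)^(p-1)) - (p-1).factorial - p := by
  haveI := Fact.mk hp
  have hp1 : 1 ≤ p := hp.one_le
  set m := p - 1 with hm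
  have hmp : m + 1 = p := Nat.succ_pred_eq_of_pos hp.pos
  have hm1 : 1 ≤ m := by
    have := hp.two_le; omega
  set q : ℕ → ℤ := fun k => ((k:ℤ)^m - 1) / p with hqdef
  have key : ∀ k ∈ Finset.Ico 1 p, (k:ℤ)^m = 1 + p * q k := by
    intro k hk
    simp only [Finset.mem_Ico] at hk
    have hdvd : (p:ℤ) ∣ (k:ℤ)^m - 1 := by
      have hk0 : (k : ZMod p) ≠ 0 := by
        rw [Ne, ZMod.natCast_eq_zero_iff]
        exact fun h => absurd (Nat.le_of_dvd (by omega) h) (by omega)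
      have h1 : (k : ZMod p) ^ (p - 1) = 1 := ZMod.pow_card_sub_one_eq_one hk0
      have h2 : (((k:ℤ)^m - 1 : ℤ) : ZMod p) = 0 := by
        push_cast
        rw [h1]
        ring
      exact (ZMod.intCast_zmod_eq_zero_iff_dvd _ p).mp h2
    simp only [hqdef]
    rw [Int.mul_ediv_cancel' hdvd]; ring
  -- Wilson
  have hwdvd : (p:ℤ) ∣ ((p-1).factorial : ℤ) + 1 := by
    have h1 : ((((p-1).factorial : ℤ) + 1 : ℤ) : ZMod p) = 0 := by
      push_cast
      rw [ZMod.wilsons_lemma]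
      ring
    exact (ZMod.intCast_zmod_eq_zero_iff_dvd _ p).mp h1
  set w : ℤ := (((p-1).factorial : ℤ) + 1) / p with hwdef
  have hw : ((p-1).factorial : ℤ) = -1 + p * w := by
    simp only [hwdef]
    rw [Int.mul_ediv_cancel' hwdvd]; ring
  -- the sum
  have hA : (∑ k ∈ Finset.range p, (k:ℤ)^m)
      = ((p-1 : ℕ) : ℤ) + p * ∑ k ∈ Finset.Ico 1 p, q k := by
    rw [Finset.range_eq_Ico, Finset.sum_eq_sum_Ico_succ_bot hp.pos]
    rw [Finset.sum_congr rfl key]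
    rw [Finset.sum_add_distrib, Finset.sum_const, Nat.card_Ico, ← Finset.mul_sum]
    push_cast
    rw [zero_pow (by omega)]
    ring
  -- the product
  have hprod : ∏ k ∈ Finset.Ico 1 p, (k:ℤ)^m = (((p-1).factorial : ℕ) : ℤ)^m := by
    rw [Finset.prod_pow]
    congr 1
    have : ∏ k ∈ Finset.Ico 1 p, (k:ℤ) = ((∏ k ∈ Finset.Ico 1 p, k : ℕ) : ℤ) := by
      push_cast; rfl
    rw [this, ← hmp, Finset.prod_Ico_id_eq_factorial m, hmp]
  -- work in ZMod (p^2)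
  set R := ZMod (p^2) with hR
  have h0 : ((p:R))^2 = 0 := by
    rw [← Nat.cast_pow, ZMod.natCast_self]
  have he : (p:R) * (p:R) = 0 := by rw [← sq]; exact h0
  have hmcast : ((m : ℕ) : R) = (p:R) - 1 := by
    rw [hm, Nat.cast_sub hp1, Nat.cast_one]
  have hEven : Even m := by
    rw [hm]; exact Nat.Odd.sub_odd hodd odd_one
  -- product cast identity
  have h1 : ((∏ k ∈ Finset.Ico 1 p, (k:ℤ)^m : ℤ) : R)
      = 1 + (p:R) * ((∑ k ∈ Finset.Ico 1 p, q k : ℤ) : R) := by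
    rw [Finset.prod_congr rfl key]
    push_cast [(Int.cast_mul : ∀ m n : ℤ, ((m * n : ℤ) : R) = m * n), (Int.cast_sum : ∀ (s : Finset ℕ) (f : ℕ → ℤ), ((∑ i ∈ s, f i : ℤ) : R) = ∑ i ∈ s, (f i : R))]
    exact aux_prod_one_add he _ _
  have h2 : ((∏ k ∈ Finset.Ico 1 p, (k:ℤ)^m : ℤ) : R) = 1 + (p:R) * (w : R) := by
    rw [hprod, hw]
    push_cast [(Int.cast_mul : ∀ m n : ℤ, ((m * n : ℤ) : R) = m * n)]
    have hsplit : (-1 + (p:R) * (w:R)) = (-1) * (1 + (-((p:R) * (w:R)))) := by ring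
    have he' : (-((p:R) * (w:R))) * (-((p:R) * (w:R))) = 0 := by
      linear_combination ((w:R) * (w:R)) * he
    rw [hsplit, mul_pow, hEven.neg_one_pow, aux_pow_one_add he' m, hmcast]
    linear_combination (-(w:R)) * h0
  have hpq : (p:R) * ((∑ k ∈ Finset.Ico 1 p, q k : ℤ) : R) = (p:R) * (w:R) := by
    have h3 := h1.symm.trans h2
    exact add_left_cancel h3
  -- conclude
  have hzero : (((∑ k ∈ Finset.range p, (k:ℤ)^(p-1)) - (p-1).factorial - p : ℤ) : R) = 0 := by
    rw [← hm, hA, hw]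
    push_cast [(Int.cast_mul : ∀ m n : ℤ, ((m * n : ℤ) : R) = m * n)]
    rw [hmcast] at *
    push_cast at hpq
    have hcs : ((∑ k ∈ Finset.Ico 1 p, q k : ℤ) : R) = ∑ k ∈ Finset.Ico 1 p, (q k : R) := by simp +zetaDelta only [Int.cast_sum]
    linear_combination hpq - (p:R) * hcs
  have := (ZMod.intCast_zmod_eq_zero_iff_dvd _ (p^2)).mp hzero
  push_cast at this
  exact this

lemma aux_padicNorm_pow (p : ℕ) [hp : Fact p.Prime] (q : ℚ) (n : ℕ) :
    padicNorm p (q ^ n) = padicNorm p q ^ n := by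
  induction n with
  | zero => simp
  | succ n ih => rw [pow_succ, pow_succ, padicNorm.mul, ih]

lemma aux_norm_div_le (p : ℕ) [hp : Fact p.Prime] (j : ℕ) :
    padicNorm p ((p:ℚ)^(j+1) / ((j:ℚ)+1)) ≤ ((p:ℚ))⁻¹ := by
  have hp1 : 1 < p := hp.out.one_lt
  have hpq : (1:ℚ) < p := by exact_mod_cast hp1
  have hpq0 : (0:ℚ) < p := by linarith
  set v := padicValNat p (j+1) with hv
  have hvd : p ^ v ∣ (j+1) := pow_padicValNat_dvd
  have hvle : v ≤ j := by
    by_contra h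
    push_neg at h
    have h1 : p ^ v ≤ j + 1 := Nat.le_of_dvd (Nat.succ_pos j) hvd
    have h2 : j + 1 < 2 ^ (j+1) := Nat.lt_two_pow_self
    have h3 : (2:ℕ) ^ (j+1) ≤ p ^ v :=
      le_trans (Nat.pow_le_pow_left hp.out.two_le _) (Nat.pow_le_pow_right hp.out.pos h)
    omega
  obtain ⟨u, hu⟩ := hvd
  have hu0 : u ≠ 0 := by rintro rfl; simp at hu
  have hpu : ¬ p ∣ u := by
    intro hd
    obtain ⟨t, rfl⟩ := hd
    have hd2 : p ^ (v + 1) ∣ j + 1 := ⟨t, by rw [hu]; ring⟩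
    exact pow_succ_padicValNat_not_dvd (Nat.succ_ne_zero j) hd2
  have hcalc : (p:ℚ)^(j+1)/((j:ℚ)+1) = (p:ℚ)^(j+1-v) / (u:ℚ) := by
    have h4 : ((j:ℚ)+1) = (p:ℚ)^v * (u:ℚ) := by exact_mod_cast congrArg (Nat.cast : ℕ → ℚ) hu
    have hu0' : (u:ℚ) ≠ 0 := by exact_mod_cast hu0
    rw [h4]
    rw [div_eq_div_iff (by positivity) (by positivity)]
    have h5 : (p:ℚ)^(j+1) = (p:ℚ)^(j+1-v) * (p:ℚ)^v := by
      rw [← pow_add]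
      congr 1
      omega
    rw [h5]
    ring
  rw [hcalc, padicNorm.div,
    (padicNorm.nat_eq_one_iff u).mpr hpu, div_one, aux_padicNorm_pow,
    padicNorm.padicNorm_p hp1]
  calc ((p:ℚ)⁻¹) ^ (j+1-v) ≤ ((p:ℚ)⁻¹) ^ 1 := by
        apply pow_le_pow_of_le_one (by positivity) (by rw [inv_le_one_iff₀]; right; linarith)
        omega
    _ = (p:ℚ)⁻¹ := pow_one _

lemma aux_bernoulli_norm (p : ℕ) [hp : Fact p.Prime] :
    ∀ m : ℕ, padicNorm p (bernoulli m) ≤ p := by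
  intro m
  induction m using Nat.strong_induction_on with
  | _ m ih =>
  have hpq : (1:ℚ) < p := by exact_mod_cast hp.out.one_lt
  have hpq0 : (0:ℚ) < p := by linarith
  have hs := sum_range_pow p m
  rw [Finset.sum_range_succ] at hs
  have hlast : bernoulli m * (((m+1).choose m : ℕ) : ℚ) * (p:ℚ)^(m+1-m) / ((m:ℚ)+1)
      = (p:ℚ) * bernoulli m := by
    rw [Nat.choose_succ_self_right]
    have h1 : m + 1 - m = 1 := by omega
    rw [h1, pow_one]
    have : ((m:ℚ)+1) ≠ 0 := by positivity
    push_cast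
    field_simp
  -- key equation
  have heq : (p:ℚ) * bernoulli m
      = ((∑ k ∈ range p, k^m : ℕ) : ℚ)
        - ∑ i ∈ range m, bernoulli i * (((m+1).choose i : ℕ) : ℚ) * (p:ℚ)^(m+1-i) / ((m:ℚ)+1) := by
    push_cast at hs ⊢
    push_cast at hlast
    linarith [hs, hlast]
  -- bound each term
  have hterm : ∀ i ∈ range m, padicNorm p
      (bernoulli i * (((m+1).choose i : ℕ) : ℚ) * (p:ℚ)^(m+1-i) / ((m:ℚ)+1)) ≤ 1 := by
    intro i hi
    rw [mem_range] at hi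
    have hid : bernoulli i * (((m+1).choose i : ℕ) : ℚ) * (p:ℚ)^(m+1-i) / ((m:ℚ)+1)
        = bernoulli i * ((m.choose i : ℕ) : ℚ) * ((p:ℚ)^((m-i)+1) / ((((m-i):ℕ):ℚ)+1)) := by
      have h1 : m + 1 - i = (m - i) + 1 := by omega
      have h2 : ((m.choose i : ℕ) : ℚ) * ((m:ℚ)+1) = (((m+1).choose i : ℕ) : ℚ) * ((((m-i):ℕ):ℚ)+1) := by
        have h4 := Nat.choose_mul_succ_eq m i
        have h3 : m + 1 - i = (m - i) + 1 := by omega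
        rw [h3] at h4
        exact_mod_cast congrArg (Nat.cast : ℕ → ℚ) h4
      have hm0 : ((m:ℚ)+1) ≠ 0 := by positivity
      have hmi0 : ((((m-i):ℕ):ℚ)+1) ≠ 0 := by positivity
      rw [h1]
      field_simp
      linear_combination (-(bernoulli i)) * h2
    rw [hid, padicNorm.mul, padicNorm.mul]
    have b1 := ih i hi
    have b2 : padicNorm p ((m.choose i : ℕ) : ℚ) ≤ 1 := padicNorm.of_nat _
    have b3 := aux_norm_div_le p (m - i)
    have hpq' : (0:ℚ) < (p:ℚ)⁻¹ := by positivity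
    calc padicNorm p (bernoulli i) * padicNorm p ((m.choose i : ℕ) : ℚ)
          * padicNorm p ((p:ℚ)^((m-i)+1) / ((((m-i):ℕ):ℚ)+1))
        ≤ (p:ℚ) * 1 * (p:ℚ)⁻¹ := by
          apply mul_le_mul (mul_le_mul b1 b2 (padicNorm.nonneg _) (by positivity)) b3
            (padicNorm.nonneg _) (by positivity)
      _ = 1 := by field_simp
  have hsum : padicNorm p (∑ i ∈ range m,
      bernoulli i * (((m+1).choose i : ℕ) : ℚ) * (p:ℚ)^(m+1-i) / ((m:ℚ)+1)) ≤ 1 :=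
    padicNorm.sum_le' hterm zero_le_one
  have hnat : padicNorm p ((∑ k ∈ range p, k^m : ℕ) : ℚ) ≤ 1 := padicNorm.of_nat _
  have hmain : padicNorm p ((p:ℚ) * bernoulli m) ≤ 1 := by
    rw [heq, sub_eq_add_neg]
    refine le_trans padicNorm.nonarchimedean (max_le hnat ?_)
    rw [padicNorm.neg]
    exact hsum
  rw [padicNorm.mul, padicNorm.padicNorm_p hp.out.one_lt] at hmain
  have hcancel : (p:ℚ) * (p:ℚ)⁻¹ = 1 := mul_inv_cancel₀ (ne_of_gt hpq0)
  nlinarith [padicNorm.nonneg (p := p) (bernoulli m)]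

lemma aux_dvd_num (p : ℕ) [hp : Fact p.Prime] {x : ℚ}
    (h : padicNorm p x ≤ (p:ℚ)^(-2:ℤ)) : ((p:ℤ)^2) ∣ x.num := by
  have hd0 : ((x.den : ℕ) : ℚ) ≠ 0 := by exact_mod_cast x.den_nz
  have hnum : ((x.num : ℤ) : ℚ) = x * (x.den : ℚ) := by
    calc ((x.num : ℤ) : ℚ) = ((x.num : ℚ)/(x.den : ℚ)) * (x.den : ℚ) :=
          (div_mul_cancel₀ _ hd0).symm
      _ = x * (x.den : ℚ) := by rw [Rat.num_div_den]
  have hb : padicNorm p ((x.num : ℤ) : ℚ) ≤ (p:ℚ)^(-2:ℤ) := by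
    rw [hnum, padicNorm.mul]
    calc padicNorm p x * padicNorm p ((x.den : ℕ) : ℚ)
        ≤ (p:ℚ)^(-2:ℤ) * 1 :=
          mul_le_mul h (padicNorm.of_nat _) (padicNorm.nonneg _) (by positivity)
      _ = (p:ℚ)^(-2:ℤ) := mul_one _
  have h7 : ((p^2 : ℕ) : ℤ) ∣ x.num :=
    (padicNorm.dvd_iff_norm_le (p := p) (n := 2) (z := x.num)).mpr (by simpa using hb)
  push_cast at h7
  exact h7

theorem glaisher_congruence (p : ℕ) (hp : p.Prime) :
    ((p : ℤ) ^ 2) ∣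
      ((p : ℚ) * bernoulli (p - 1) - p - ((p - 1).factorial : ℚ)).num := by
  haveI := Fact.mk hp
  by_cases h2 : p = 2
  · subst h2
    norm_num [bernoulli_one]
  by_cases h3 : p = 3
  · subst h3
    have hb : bernoulli 2 = 1/6 := by
      rw [bernoulli_eq_bernoulli'_of_ne_one (by norm_num), bernoulli'_two]
    norm_num [hb]
  have h4 : p ≠ 4 := by rintro rfl; norm_num at hp
  have h5 : 5 ≤ p := by have := hp.two_le; omega
  have hodd : Odd p := hp.odd_of_ne_two h2
  have hpq : (1:ℚ) < p := by exact_mod_cast hp.one_lt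
  have hpq0 : (0:ℚ) < p := by linarith
  have hp0 : (p:ℚ) ≠ 0 := ne_of_gt hpq0
  have hmp : p - 1 + 1 = p := by omega
  -- Faulhaber
  have hs := sum_range_pow p (p-1)
  rw [Finset.sum_range_succ] at hs
  rw [hmp] at hs
  have hden : (((p-1):ℕ):ℚ) + 1 = (p:ℚ) := by
    rw [← hmp]; push_cast; ring
  rw [hden] at hs
  -- last term
  have hch : p.choose (p-1) = p := by
    rw [Nat.choose_symm hp.one_le, Nat.choose_one_right]
  have hpm : p - (p-1) = 1 := by omega
  have hlast : bernoulli (p-1) * ((p.choose (p-1) : ℕ) : ℚ) * (p:ℚ)^(p-(p-1)) / (p:ℚ)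
      = (p:ℚ) * bernoulli (p-1) := by
    rw [hch, hpm, pow_one]
    field_simp
  rw [hlast] at hs
  -- Lerch integer
  set N : ℤ := (∑ k ∈ Finset.range p, (k:ℤ)^(p-1)) - (p-1).factorial - p with hN
  have hl : ((p:ℤ)^2) ∣ N := aux_lerch p hp hodd
  have hNnorm : padicNorm p ((N : ℤ) : ℚ) ≤ (p:ℚ)^(-2:ℤ) := by
    have h6 : ((p^2 : ℕ) : ℤ) ∣ N := by push_cast; exact hl
    have h7 := (padicNorm.dvd_iff_norm_le (p := p) (n := 2) (z := N)).mp h6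
    simpa using h7
  -- rewrite the target rational
  have hX : (p:ℚ) * bernoulli (p-1) - p - (((p-1).factorial : ℕ) : ℚ)
      = ((N : ℤ) : ℚ)
        - ∑ i ∈ range (p-1), bernoulli i * ((p.choose i : ℕ) : ℚ) * (p:ℚ)^(p-i) / (p:ℚ) := by
    have hc : ((∑ k ∈ Finset.range p, (k:ℤ)^(p-1) : ℤ) : ℚ) = ∑ k ∈ range p, (k:ℚ)^(p-1) := by
      push_cast; rfl
    rw [hN]
    push_cast
    push_cast at hc
    rw [hc]
    linarith [hs]
  have hXnorm : padicNorm p ((p:ℚ) * bernoulli (p-1) - p - (((p-1).factorial : ℕ) : ℚ))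
      ≤ (p:ℚ)^(-2:ℤ) := by
    rw [hX, sub_eq_add_neg]
    refine le_trans padicNorm.nonarchimedean (max_le hNnorm ?_)
    rw [padicNorm.neg]
    apply padicNorm.sum_le' _ (by positivity)
    intro i hi
    rw [mem_range] at hi
    by_cases hi0 : i = 0
    · subst hi0
      simp only [bernoulli_zero, Nat.choose_zero_right, Nat.cast_one, one_mul, mul_one,
        Nat.sub_zero]
      have hpp : (p:ℚ)^p / (p:ℚ) = (p:ℚ)^(p-1) := by
        rw [div_eq_iff hp0, ← pow_succ]
        congr 1
        omega
      rw [hpp, aux_padicNorm_pow, padicNorm.padicNorm_p hp.one_lt]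
      rw [inv_pow, ← zpow_natCast, ← zpow_neg]
      apply zpow_le_zpow_right₀ (le_of_lt hpq)
      omega
    by_cases hi2 : i = p - 2
    · have hb0 : bernoulli i = 0 := by
        subst hi2
        obtain ⟨t, ht⟩ := hodd
        rw [bernoulli_eq_bernoulli'_of_ne_one (by omega),
          bernoulli'_eq_zero_of_odd ⟨t - 1, by omega⟩ (by omega)]
      rw [hb0]
      simp only [zero_mul]
      rw [zero_div, padicNorm.zero]
      positivity
    -- main case : 1 ≤ i ≤ p - 3
    have hterm : bernoulli i * ((p.choose i : ℕ) : ℚ) * (p:ℚ)^(p-i) / (p:ℚ)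
        = bernoulli i * ((p.choose i : ℕ) : ℚ) * (p:ℚ)^(p-1-i) := by
      have hpi : p - i = (p - 1 - i) + 1 := by omega
      rw [hpi, pow_succ]
      field_simp
    rw [hterm, padicNorm.mul, padicNorm.mul]
    have b1 := aux_bernoulli_norm p i
    have b2 : padicNorm p ((p.choose i : ℕ) : ℚ) ≤ (p:ℚ)⁻¹ := by
      have hdv : ((p^1 : ℕ) : ℤ) ∣ ((p.choose i : ℕ) : ℤ) := by
        push_cast
        rw [pow_one]
        exact_mod_cast Nat.Prime.dvd_choose_self hp hi0 (by omega)
      have h8 := (padicNorm.dvd_iff_norm_le (p := p) (n := 1) (z := (p.choose i : ℤ))).mp hdv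
      rw [zpow_neg] at h8
      simpa using h8
    have b3 : padicNorm p ((p:ℚ)^(p-1-i)) ≤ ((p:ℚ)⁻¹)^2 := by
      rw [aux_padicNorm_pow, padicNorm.padicNorm_p hp.one_lt]
      apply pow_le_pow_of_le_one (by positivity) (by rw [inv_le_one_iff₀]; right; linarith)
      omega
    calc padicNorm p (bernoulli i) * padicNorm p ((p.choose i : ℕ) : ℚ)
          * padicNorm p ((p:ℚ)^(p-1-i))
        ≤ (p:ℚ) * (p:ℚ)⁻¹ * ((p:ℚ)⁻¹)^2 := by
          apply mul_le_mul (mul_le_mul b1 b2 (padicNorm.nonneg _) (by positivity)) b3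
            (padicNorm.nonneg _) (by positivity)
      _ = (p:ℚ)^(-2:ℤ) := by
          rw [zpow_neg]
          field_simp
  exact aux_dvd_num p hXnorm
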